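/- Let p be a prime, n a natural number, and H a p-subgroup of Σ_n. Let V ≤ H be a subgroup of order p contained in the kernel of the quotient map H → H/p, where H/p is the quotient of H by the normal subgroup generated by all commutators and all p-th powers. Then for every H-invariant setoid λ on Fin n with ⊥ < λ < ⊤, the induced action of V on the set of λ-classes is not transitive. -/

import Mathlib

open scoped commutatorElement

/-- Let `p` be a prime, `H` a `p`-subgroup of `Σ_n`, and `V ≤ H`
a subgroup of order `p` contained in the kernel of `H → H/p` (the maximal elementary
abelian `p`-quotient).  Then for every `H`-invariant setoid `λ` on `Fin n` with
`⊥ < λ < ⊤`, the induced action of `V` on the set of `λ`-classes is not transitive. -/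
theorem stmt1 (p n : ℕ) (hp : p.Prime) (H : Subgroup (Equiv.Perm (Fin n)))
    (hH : IsPGroup p H)
    (V : Subgroup H) (hV : Nat.card V = p)
    (hVker : V ≤ Subgroup.normalClosure
      {y : H | (∃ a b : H, y = ⁅a, b⁆) ∨ ∃ a : H, y = a ^ p})
    (lam : Setoid (Fin n))
    (hinv : ∀ h ∈ H, ∀ x y : Fin n, lam.r x y → lam.r (h x) (h y))
    (hbot : ⊥ < lam) (htop : lam < ⊤) :
    ¬ ∀ x y : Fin n, ∃ v : V, lam.r (((v : H) : Equiv.Perm (Fin n)) x) y := by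
  classical
  have fp : Fact p.Prime := ⟨hp⟩
  intro hT
  -- two unrelated points
  obtain ⟨x0, y0, hxy⟩ : ∃ x y : Fin n, ¬ lam.r x y := by
    by_contra hc
    push_neg at hc
    exact htop.ne (Setoid.ext fun a b => ⟨fun _ => trivial, fun _ => hc a b⟩)
  have hinv' : ∀ (h : Equiv.Perm (Fin n)), h ∈ H → ∀ a b : Fin n,
      lam.r a b ↔ lam.r (h a) (h b) := by
    intro h hh a b
    refine ⟨hinv h hh a b, fun hr => ?_⟩
    have := hinv h⁻¹ (inv_mem hh) _ _ hr
    simpa using this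
  let φ : H →* Equiv.Perm (Quotient lam) :=
  { toFun := fun h => Quotient.congr (h : Equiv.Perm (Fin n)) (hinv' h h.2)
    map_one' := by
      ext q
      induction q using Quotient.inductionOn with
      | h a => rfl
    map_mul' := by
      intro a b
      ext q
      induction q using Quotient.inductionOn with
      | h c => rfl }
  have hφmk : ∀ (h : H) (a : Fin n),
      φ h (Quotient.mk lam a) = Quotient.mk lam ((h : Equiv.Perm (Fin n)) a) :=
    fun h a => rfl
  -- |Q| ≤ p
  have hsurj : Function.Surjective (fun v : V => Quotient.mk lam
      (((v : H) : Equiv.Perm (Fin n)) x0)) := by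
    intro q
    induction q using Quotient.inductionOn with
    | h y =>
      obtain ⟨v, hv⟩ := hT x0 y
      exact ⟨v, Quotient.sound hv⟩
  have hQle : Nat.card (Quotient lam) ≤ p := by
    calc Nat.card (Quotient lam) ≤ Nat.card V := Nat.card_le_card_of_surjective _ hsurj
    _ = p := hV
  -- the image of φ has card dividing p
  have hrange : IsPGroup p φ.range := IsPGroup.of_surjective hH φ.rangeRestrict φ.rangeRestrict_surjective
  obtain ⟨k, hk⟩ := IsPGroup.iff_card.mp hrange
  have hdvd : Nat.card φ.range ∣ Nat.card (Equiv.Perm (Quotient lam)) :=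
    Subgroup.card_subgroup_dvd_card _
  have hcardperm : Nat.card (Equiv.Perm (Quotient lam)) = (Nat.card (Quotient lam)).factorial := by
    simp [Nat.card_eq_fintype_card, Fintype.card_perm]
  have hk1 : k ≤ 1 := by
    by_contra hk2
    push_neg at hk2
    have hp2 : p ^ 2 ∣ (Nat.card (Quotient lam)).factorial := by
      refine dvd_trans (pow_dvd_pow p hk2) ?_
      rw [← hk, ← hcardperm]; exact hdvd
    have hp2' : p ^ 2 ∣ p.factorial :=
      hp2.trans (Nat.factorial_dvd_factorial hQle)
    have : p ∣ (p - 1).factorial := by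
      have hfac : p.factorial = p * (p - 1).factorial :=
        (Nat.mul_factorial_pred hp.ne_zero).symm
      rw [hfac, pow_two] at hp2'
      exact (mul_dvd_mul_iff_left hp.pos.ne').mp hp2'
    have h2 := hp.two_le
    have := (Nat.Prime.dvd_factorial hp).mp this
    omega
  have hcard_dvd : Nat.card φ.range ∣ p := by
    rw [hk]
    exact pow_dvd_pow p hk1 |>.trans (by rw [pow_one])
  -- exponent p on range
  have hpow : ∀ g : φ.range, g ^ p = 1 := by
    intro g
    obtain ⟨t, ht⟩ := hcard_dvd
    rw [ht, pow_mul, pow_card_eq_one', one_pow]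
  -- range is commutative
  have hcomm : ∀ a b : φ.range, a * b = b * a := by
    rcases (Nat.Prime.eq_one_or_self_of_dvd hp _ hcard_dvd) with h1 | hpp
    · intro a b
      have : Subsingleton φ.range := Nat.card_eq_one_iff_unique.mp h1 |>.1
      exact Subsingleton.elim _ _
    · have : Fact p.Prime := ⟨hp⟩
      have hc : IsCyclic φ.range := isCyclic_of_prime_card hpp
      obtain ⟨g, hg⟩ := hc.exists_generator
      intro a b
      obtain ⟨i, hi⟩ := hg a
      obtain ⟨j, hj⟩ := hg b
      rw [← hi, ← hj, zpow_mul_comm]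
  -- generators are in ker φ
  have hgen : {y : H | (∃ a b : H, y = ⁅a, b⁆) ∨ ∃ a : H, y = a ^ p} ⊆ φ.ker := by
    rintro y (⟨a, b, rfl⟩ | ⟨a, rfl⟩)
    · have := hcomm ⟨φ a, ⟨a, rfl⟩⟩ ⟨φ b, ⟨b, rfl⟩⟩
      have hab : φ a * φ b = φ b * φ a := congrArg Subtype.val this
      simp [MonoidHom.mem_ker, commutatorElement_def, map_mul, map_inv]
      group
      rw [hab]
      group
    · have := hpow ⟨φ a, ⟨a, rfl⟩⟩
      have ha : (φ a) ^ p = 1 := by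
        have := congrArg Subtype.val this
        simpa using this
      simp [MonoidHom.mem_ker, map_pow, ha]
  have hVk : V ≤ φ.ker :=
    le_trans hVker (Subgroup.normalClosure_le_normal hgen)
  -- contradiction
  obtain ⟨v, hv⟩ := hT x0 y0
  have hvker : φ v = 1 := hVk v.2
  have : Quotient.mk lam (((v : H) : Equiv.Perm (Fin n)) x0) = Quotient.mk lam x0 := by
    rw [← hφmk]; rw [hvker]; rfl
  have hvx : lam.r (((v : H) : Equiv.Perm (Fin n)) x0) x0 := Quotient.exact this
  exact hxy (lam.trans (lam.symm hvx) hv)
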